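/- Let f ∈ C[x_0,…,x_n] satisfy condition (C) (the augmented exponent matrix M̃ has rank n+2). Then f is integral over the subring C[x_0·∂f/∂x_0, …, x_n·∂f/∂x_n] of C[x_0,…,x_n]; indeed f satisfies a monic polynomial equation of degree d+h (where d+h = |Δ| from the relation m^Δ = λ^r·m^δ among the monomials of f) with coefficients in this subring. -/

import Mathlib

set_option maxHeartbeats 1000000
set_option synthInstance.maxHeartbeats 400000
open MvPolynomial Matrix

private lemma X_mul_pderiv_monomial {N : ℕ} (i : Fin N) (d : Fin N →₀ ℕ) (a : ℂ) :
    (X i : MvPolynomial (Fin N) ℂ) * pderiv i (monomial d a) = monomial d (a * d i) := by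
  rw [pderiv_monomial]
  by_cases h : d i = 0
  · simp [h]
  · rw [X, monomial_mul, one_mul]
    have hd : Finsupp.single i 1 + (d - Finsupp.single i 1) = d := by
      ext j
      rcases eq_or_ne i j with rfl | hij
      · simp only [Finsupp.add_apply, Finsupp.tsub_apply, Finsupp.single_eq_same]
        omega
      · simp [Finsupp.single_eq_of_ne' hij]
    rw [hd]

private lemma prod_X_pow_univ {N : ℕ} (γ : Fin N → ℕ) :
    (∏ i, (X i : MvPolynomial (Fin N) ℂ) ^ γ i)
      = monomial (Finsupp.equivFunOnFinite.symm γ) (1 : ℂ) := by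
  rw [← prod_X_pow_eq_monomial]
  refine (Finset.prod_subset (Finset.subset_univ _) fun x _ hx => ?_).symm
  simp only [Finsupp.mem_support_iff, ne_eq, not_not] at hx
  rw [show γ x = 0 from hx, pow_zero]

private lemma prod_monomial_one {N : ℕ} {ι : Type*} (t : Finset ι) (e : ι → (Fin N →₀ ℕ)) :
    (∏ j ∈ t, monomial (e j) (1 : ℂ)) = monomial (∑ j ∈ t, e j) (1 : ℂ) := by
  induction t using Finset.cons_induction with
  | empty => simp
  | cons j t hj ih => rw [Finset.prod_cons, Finset.sum_cons, ih, monomial_mul, one_mul]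

/-- Let `f = Σ_{j=1}^{n+1} x^{α_j} + λ·x^{α_{n+2}}` satisfy condition (C)
(the augmented exponent matrix `M̃` is invertible).  Then `f` is integral over
the subring `ℂ[x_0·∂f/∂x_0,…,x_n·∂f/∂x_n]`; indeed `f` satisfies a monic
polynomial equation of degree `d+h = max(D₁,D₂)` (the weight `|Δ|` coming from
the relation `m^Δ = λ^r·m^δ` among the monomials of `f`) with coefficients in
that subring. -/
theorem f_integral_over_log_derivatives (n : ℕ)
    (α : Fin (n + 1) → Fin (n + 1) → ℕ) (β : Fin (n + 1) → ℕ) (ρ : Fin (n + 1) → ℚ)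
    (hind : LinearIndependent ℚ (fun j : Fin (n + 1) => fun i => (α j i : ℚ)))
    (hβ : ∀ i, (β i : ℚ) = ∑ j, ρ j * (α j i : ℚ))
    (r : ℕ) (hr : 0 < r)
    (hrint : ∀ j, ∃ p : ℤ, (r : ℚ) * ρ j = (p : ℚ))
    (hrmin : ∀ r' : ℕ, 0 < r' → (∀ j, ∃ p : ℤ, (r' : ℚ) * ρ j = (p : ℚ)) → r ≤ r')
    (p : Fin (n + 1) → ℤ) (hp : ∀ j, (p j : ℚ) = (r : ℚ) * ρ j)
    (hC : (Matrix.of (Fin.cons (fun _ : Fin (n + 2) => (1 : ℚ))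
        (fun i : Fin (n + 1) => Fin.snoc (fun j : Fin (n + 1) => (α j i : ℚ)) (β i : ℚ)))).det ≠ 0)
    (lam : ℂ) (hlam : lam ≠ 0)
    (f : MvPolynomial (Fin (n + 1)) ℂ)
    (hf : f = (∑ j, ∏ i, (X i : MvPolynomial (Fin (n + 1)) ℂ) ^ α j i)
        + C lam * ∏ i, (X i : MvPolynomial (Fin (n + 1)) ℂ) ^ β i) :
    IsIntegral (Algebra.adjoin ℂ
        (Set.range (fun i : Fin (n + 1) => (X i : MvPolynomial (Fin (n + 1)) ℂ) * pderiv i f))) f ∧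
    ∃ q : Polynomial (Algebra.adjoin ℂ
        (Set.range (fun i : Fin (n + 1) => (X i : MvPolynomial (Fin (n + 1)) ℂ) * pderiv i f))),
      q.Monic ∧
      q.natDegree = (max ((r : ℤ) + ∑ j ∈ Finset.univ.filter (fun j => ρ j < 0), (- p j))
          (∑ j ∈ Finset.univ.filter (fun j => 0 < ρ j), p j)).toNat ∧
      Polynomial.aeval f q = 0 := by
  classical
  set Mt : Matrix (Fin (n + 2)) (Fin (n + 2)) ℚ :=
    Matrix.of (Fin.cons (fun _ : Fin (n + 2) => (1 : ℚ))
      (fun i : Fin (n + 1) => Fin.snoc (fun j : Fin (n + 1) => (α j i : ℚ)) (β i : ℚ)))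
    with hMt
  set d : Fin (n + 2) → (Fin (n + 1) →₀ ℕ) :=
    Fin.snoc (fun j => Finsupp.equivFunOnFinite.symm (α j)) (Finsupp.equivFunOnFinite.symm β)
    with hd
  set co : Fin (n + 2) → ℂ := Fin.snoc (fun _ => 1) lam with hco
  set W : Fin (n + 2) → MvPolynomial (Fin (n + 1)) ℂ := fun k => monomial (d k) (co k) with hW
  -- matrix entries vs exponents
  have hMt0 : ∀ k, Mt 0 k = 1 := fun k => rfl
  have hdK : ∀ (k : Fin (n + 2)) (i : Fin (n + 1)), ((d k i : ℚ)) = Mt i.succ k := by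
    intro k i
    refine Fin.lastCases ?_ ?_ k
    · simp [hd, hMt, Fin.snoc_last, Fin.cons_succ]
    · intro j
      simp [hd, hMt, Fin.snoc_castSucc, Fin.cons_succ]
  -- f as sum of monomials
  have hfW : f = ∑ k, W k := by
    rw [hf, Fin.sum_univ_castSucc (f := fun k => W k)]
    congr 1
    · refine Finset.sum_congr rfl fun j _ => ?_
      rw [prod_X_pow_univ (α j)]
      simp [hW, hd, hco, Fin.snoc_castSucc]
    · rw [prod_X_pow_univ β]
      simp [hW, hd, hco, Fin.snoc_last, C_mul_monomial]
  -- the vector F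
  set Fv : Fin (n + 2) → MvPolynomial (Fin (n + 1)) ℂ :=
    Fin.cons f (fun i => X i * pderiv i f) with hFvdef
  have hFv : ∀ l, Fv l = ∑ k, C ((Mt l k : ℚ) : ℂ) * W k := by
    refine Fin.cases ?_ ?_
    · rw [show Fv 0 = f from rfl, hfW]
      refine Finset.sum_congr rfl fun k _ => ?_
      rw [hMt0]
      push_cast
      rw [_root_.map_one, one_mul]
    · intro i
      rw [show Fv i.succ = X i * pderiv i f from rfl, hfW, _root_.map_sum, Finset.mul_sum]
      refine Finset.sum_congr rfl fun k _ => ?_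
      rw [hW, X_mul_pderiv_monomial, ← hdK]
      rw [C_mul_monomial]
      push_cast
      rw [mul_comm]
  have hdet : IsUnit Mt.det := isUnit_iff_ne_zero.mpr hC
  set Mi : Matrix (Fin (n + 2)) (Fin (n + 2)) ℚ := Mt⁻¹ with hMi
  have hMiM : Mi * Mt = 1 := Matrix.nonsing_inv_mul _ hdet
  have hWF : ∀ k, W k = ∑ l, C ((Mi k l : ℚ) : ℂ) * Fv l := by
    intro k
    have : ∀ l, C ((Mi k l : ℚ) : ℂ) * Fv l
        = ∑ m, C (((Mi k l * Mt l m : ℚ)) : ℂ) * W m := by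
      intro l
      rw [hFv l, Finset.mul_sum]
      refine Finset.sum_congr rfl fun m _ => ?_
      push_cast
      rw [_root_.map_mul, mul_assoc]
    rw [Finset.sum_congr rfl fun l _ => this l, Finset.sum_comm]
    have h2 : ∀ m : Fin (n + 2), (∑ l, C (((Mi k l * Mt l m : ℚ)) : ℂ) * W m)
        = C (((Mi * Mt) k m : ℚ) : ℂ) * W m := by
      intro m
      rw [← Finset.sum_mul, Matrix.mul_apply]
      push_cast
      rw [_root_.map_sum]
    rw [Finset.sum_congr rfl fun m _ => h2 m, hMiM]
    rw [Finset.sum_eq_single k]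
    · simp
    · intro m _ hm
      simp [Matrix.one_apply, (Ne.symm hm)]
    · intro h; exact absurd (Finset.mem_univ k) h
  -- the subalgebra
  set A := Algebra.adjoin ℂ
      (Set.range (fun i : Fin (n + 1) => (X i : MvPolynomial (Fin (n + 1)) ℂ) * pderiv i f))
    with hA
  have hgen : ∀ i : Fin (n + 1), (X i * pderiv i f) ∈ A :=
    fun i => Algebra.subset_adjoin ⟨i, rfl⟩
  set c : Fin (n + 2) → ℂ := fun k => ((Mi k 0 : ℚ) : ℂ) with hc
  set g : Fin (n + 2) → A := fun k =>
    ∑ i : Fin (n + 1), ((Mi k i.succ : ℚ) : ℂ) • (⟨X i * pderiv i f, hgen i⟩ : A) with hg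
  have hgval : ∀ k, ((g k : MvPolynomial (Fin (n + 1)) ℂ))
      = ∑ i, C ((Mi k i.succ : ℚ) : ℂ) * (X i * pderiv i f) := by
    intro k
    rw [hg]
    push_cast
    refine Finset.sum_congr rfl fun i _ => ?_
    rw [smul_eq_C_mul]
  have hWdecomp : ∀ k, W k = C (c k) * f + ((g k : MvPolynomial (Fin (n + 1)) ℂ)) := by
    intro k
    rw [hWF k, Fin.sum_univ_succ, hgval]
    rfl
  -- first column of the inverse
  set s : ℚ := (∑ j, ρ j) - 1 with hsdef
  set v : Fin (n + 2) → ℚ := Fin.snoc ρ (-1) with hv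
  have hMv : Mt *ᵥ v = fun l => (Fin.cons s (fun _ => (0 : ℚ)) : Fin (n + 2) → ℚ) l := by
    funext l
    refine Fin.cases ?_ ?_ l
    · rw [Matrix.mulVec, dotProduct]
      simp only [Fin.cons_zero]
      rw [Fin.sum_univ_castSucc (f := fun k => Mt 0 k * v k)]
      simp only [hMt0, one_mul, hv, Fin.snoc_castSucc, Fin.snoc_last, hsdef]
      ring
    · intro i
      rw [Matrix.mulVec, dotProduct]
      simp only [Fin.cons_succ]
      rw [Fin.sum_univ_castSucc (f := fun k => Mt i.succ k * v k)]
      have h1 : ∀ j : Fin (n + 1), Mt i.succ j.castSucc * v j.castSucc = (α j i : ℚ) * ρ j := by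
        intro j
        simp [hMt, hv, Fin.cons_succ, Fin.snoc_castSucc]
      have h2 : Mt i.succ (Fin.last (n + 1)) * v (Fin.last (n + 1)) = -(β i : ℚ) := by
        simp [hMt, hv, Fin.cons_succ, Fin.snoc_last]
      rw [Finset.sum_congr rfl fun j _ => h1 j, h2, hβ i]
      rw [Finset.sum_congr rfl fun j (_ : j ∈ Finset.univ) => mul_comm (ρ j) ((α j i : ℚ))]
      ring
  have hs : s ≠ 0 := by
    intro h0
    apply hC
    rw [← Matrix.exists_mulVec_eq_zero_iff]
    refine ⟨v, ?_, ?_⟩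
    · intro hv0
      have := congrFun hv0 (Fin.last (n + 1))
      rw [hv] at this
      simp at this
    · rw [hMv]
      funext l
      refine Fin.cases ?_ ?_ l
      · simp [h0]
      · intro i; simp
  have hMicol : ∀ k, Mi k 0 = v k / s := by
    have h1 : Mi *ᵥ (Mt *ᵥ v) = v := by
      rw [Matrix.mulVec_mulVec, hMiM, Matrix.one_mulVec]
    intro k
    have h2 := congrFun h1 k
    rw [hMv] at h2
    rw [Matrix.mulVec, dotProduct, Fin.sum_univ_succ] at h2
    simp only [Fin.cons_zero, Fin.cons_succ, mul_zero, Finset.sum_const_zero, add_zero,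
      mul_one] at h2
    field_simp
    linarith [h2]
  have hclast : c (Fin.last (n + 1)) = ((-1 / s : ℚ) : ℂ) := by
    rw [show c (Fin.last (n + 1)) = ((Mi (Fin.last (n + 1)) 0 : ℚ) : ℂ) from rfl, hMicol]
    simp [hv, Fin.snoc_last]
  have hccast : ∀ j : Fin (n + 1), c j.castSucc = ((ρ j / s : ℚ) : ℂ) := by
    intro j
    rw [show c j.castSucc = ((Mi j.castSucc 0 : ℚ) : ℂ) from rfl, hMicol]
    simp [hv, Fin.snoc_castSucc]
  have hclast_ne : c (Fin.last (n + 1)) ≠ 0 := by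
    rw [hclast]
    rw [ne_eq, Rat.cast_eq_zero]
    intro h
    rw [div_eq_zero_iff] at h
    rcases h with h | h
    · norm_num at h
    · exact hs h
  have hcj_ne : ∀ j : Fin (n + 1), ρ j ≠ 0 → c j.castSucc ≠ 0 := by
    intro j hj
    rw [hccast j, ne_eq, Rat.cast_eq_zero]
    intro h
    rw [div_eq_zero_iff] at h
    rcases h with h | h
    · exact hj h
    · exact hs h
  -- sign facts
  set NS := Finset.univ.filter (fun j => ρ j < 0) with hNS
  set PS := Finset.univ.filter (fun j => 0 < ρ j) with hPS
  set a : Fin (n + 1) → ℕ := fun j => (-p j).toNat with ha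
  set b : Fin (n + 1) → ℕ := fun j => (p j).toNat with hb
  have hrQ : (r : ℚ) ≠ 0 := by
    exact_mod_cast hr.ne'
  have hpneg : ∀ j ∈ NS, ((a j : ℤ)) = -p j := by
    intro j hj
    rw [hNS, Finset.mem_filter] at hj
    have h1 : (p j : ℚ) < 0 := by
      rw [hp j]
      exact mul_neg_of_pos_of_neg (by exact_mod_cast hr) hj.2
    have hpj : p j < 0 := by exact_mod_cast h1
    rw [ha, Int.toNat_of_nonneg (by omega)]
  have hppos : ∀ j ∈ PS, ((b j : ℤ)) = p j := by
    intro j hj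
    rw [hPS, Finset.mem_filter] at hj
    have h1 : (0 : ℚ) < (p j : ℚ) := by
      rw [hp j]
      exact mul_pos (by exact_mod_cast hr) hj.2
    have hpj : 0 < p j := by exact_mod_cast h1
    rw [hb, Int.toNat_of_nonneg (by omega)]
  have hpzero : ∀ j, ρ j = 0 → p j = 0 := by
    intro j hj
    have : (p j : ℚ) = 0 := by rw [hp j, hj, mul_zero]
    exact_mod_cast this
  have hanq : ∀ j ∈ NS, ((a j : ℚ)) = -((r : ℚ) * ρ j) := by
    intro j hj
    have h1 := hpneg j hj
    have h2 : ((a j : ℤ) : ℚ) = ((-p j : ℤ) : ℚ) := by exact_mod_cast congrArg (Int.cast : ℤ → ℚ) h1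
    push_cast at h2
    rw [h2, hp j]
  have hbpq : ∀ j ∈ PS, ((b j : ℚ)) = (r : ℚ) * ρ j := by
    intro j hj
    have h1 := hppos j hj
    have h2 : ((b j : ℤ) : ℚ) = ((p j : ℤ) : ℚ) := by exact_mod_cast congrArg (Int.cast : ℤ → ℚ) h1
    push_cast at h2
    rw [h2, hp j]
  have hsplitgen : ∀ (F : Fin (n + 1) → ℚ), (∀ j, ρ j = 0 → F j = 0) →
      ∑ j, F j = ∑ j ∈ PS, F j + ∑ j ∈ NS, F j := by
    intro F hF
    rw [← Finset.sum_filter_add_sum_filter_not Finset.univ (fun j => 0 < ρ j) F]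
    congr 1
    refine (Finset.sum_subset ?_ ?_).symm
    · intro j hj
      rw [hNS, Finset.mem_filter] at hj
      rw [Finset.mem_filter]
      exact ⟨Finset.mem_univ j, by simp; linarith [hj.2]⟩
    · intro j hj hj2
      rw [Finset.mem_filter] at hj
      rw [hNS, Finset.mem_filter] at hj2
      push_neg at hj2
      refine hF j (le_antisymm ?_ ?_)
      · exact not_lt.mp hj.2
      · exact hj2 (Finset.mem_univ j)
  -- the exponent identity
  have hexp : r • d (Fin.last (n + 1)) + ∑ j ∈ NS, a j • d j.castSucc
      = ∑ j ∈ PS, b j • d j.castSucc := by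
    have hdc : ∀ (j : Fin (n + 1)) (i : Fin (n + 1)), d j.castSucc i = α j i := by
      intro j i
      rw [hd]
      simp [Fin.snoc_castSucc]
    have hdl : ∀ i, d (Fin.last (n + 1)) i = β i := by
      intro i
      rw [hd]
      simp [Fin.snoc_last]
    ext i
    have hL : (r • d (Fin.last (n + 1)) + ∑ j ∈ NS, a j • d j.castSucc) i
        = r * β i + ∑ j ∈ NS, a j * α j i := by
      rw [Finsupp.add_apply, Finsupp.smul_apply, Finset.sum_apply']
      rw [hdl, smul_eq_mul]
      congr 1
      exact Finset.sum_congr rfl fun j _ => by rw [Finsupp.smul_apply, hdc, smul_eq_mul]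
    have hR : (∑ j ∈ PS, b j • d j.castSucc) i = ∑ j ∈ PS, b j * α j i := by
      rw [Finset.sum_apply']
      exact Finset.sum_congr rfl fun j _ => by rw [Finsupp.smul_apply, hdc, smul_eq_mul]
    rw [hL, hR]
    have key : (r : ℚ) * β i + ∑ j ∈ NS, (a j : ℚ) * α j i = ∑ j ∈ PS, (b j : ℚ) * α j i := by
      have e3 : ∑ j, (p j : ℚ) * α j i
          = ∑ j ∈ PS, (p j : ℚ) * α j i + ∑ j ∈ NS, (p j : ℚ) * α j i := by
        refine hsplitgen _ fun j hj => ?_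
        rw [hpzero j hj]
        push_cast
        ring
      have e4 : ∑ j, (p j : ℚ) * α j i = (r : ℚ) * β i := by
        rw [hβ i, Finset.mul_sum]
        refine Finset.sum_congr rfl fun j _ => ?_
        rw [hp j]
        ring
      have e5 : ∑ j ∈ NS, (a j : ℚ) * α j i = -∑ j ∈ NS, (p j : ℚ) * α j i := by
        rw [← Finset.sum_neg_distrib]
        refine Finset.sum_congr rfl fun j hj => ?_
        rw [hanq j hj, hp j]
        ring
      have e6 : ∑ j ∈ PS, (b j : ℚ) * α j i = ∑ j ∈ PS, (p j : ℚ) * α j i := by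
        refine Finset.sum_congr rfl fun j hj => ?_
        rw [hbpq j hj, hp j]
      rw [e5, e6]
      linarith [e3, e4]
    have : ((r * β i + ∑ j ∈ NS, a j * α j i : ℕ) : ℚ)
        = ((∑ j ∈ PS, b j * α j i : ℕ) : ℚ) := by
      push_cast
      exact key
    exact_mod_cast this
  -- the key monomial identity
  have hkey : W (Fin.last (n + 1)) ^ r * ∏ j ∈ NS, W j.castSucc ^ a j
      = C (lam ^ r) * ∏ j ∈ PS, W j.castSucc ^ b j := by
    have hWc : ∀ j : Fin (n + 1), W j.castSucc = monomial (d j.castSucc) (1 : ℂ) := by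
      intro j
      rw [hW]
      simp only [hco, Fin.snoc_castSucc]
    have hWl : W (Fin.last (n + 1)) = monomial (d (Fin.last (n + 1))) lam := by
      rw [hW]
      simp only [hco, Fin.snoc_last]
    rw [hWl, monomial_pow]
    rw [Finset.prod_congr rfl fun j _ => by rw [hWc j, monomial_pow, one_pow],
        Finset.prod_congr rfl fun j (_ : j ∈ PS) => by rw [hWc j, monomial_pow, one_pow]]
    rw [prod_monomial_one, prod_monomial_one, monomial_mul, mul_one, C_mul_monomial, mul_one]
    rw [hexp]
  -- the two degrees differ
  set D1 : ℕ := r + ∑ j ∈ NS, a j with hD1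
  set D2 : ℕ := ∑ j ∈ PS, b j with hD2
  have eD1 : (D1 : ℚ) = (r : ℚ) - (r : ℚ) * ∑ j ∈ NS, ρ j := by
    rw [hD1]
    push_cast
    rw [Finset.mul_sum, Finset.sum_congr rfl hanq, Finset.sum_neg_distrib]
    ring
  have eD2 : (D2 : ℚ) = (r : ℚ) * ∑ j ∈ PS, ρ j := by
    rw [hD2]
    push_cast
    rw [Finset.mul_sum, Finset.sum_congr rfl hbpq]
  have hDne : D1 ≠ D2 := by
    intro h
    apply hs
    have h6 : (r : ℚ) - (r : ℚ) * ∑ j ∈ NS, ρ j = (r : ℚ) * ∑ j ∈ PS, ρ j := by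
      rw [← eD1, ← eD2]
      exact_mod_cast congrArg (Nat.cast : ℕ → ℚ) h
    have e3 : ∑ j, ρ j = ∑ j ∈ PS, ρ j + ∑ j ∈ NS, ρ j := hsplitgen ρ (fun _ h => h)
    have h7 : (r : ℚ) * s = 0 := by
      rw [hsdef, mul_sub, mul_one, e3, mul_add]
      linarith [h6]
    exact (mul_eq_zero.mp h7).resolve_left hrQ
  -- linear polynomials over A
  have hevN : ∀ k, c k ≠ 0 →
      C (c k) * Polynomial.aeval f
        (Polynomial.X + Polynomial.C ((c k)⁻¹ • g k) : Polynomial ↥A) = W k := by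
    intro k hk
    rw [map_add, Polynomial.aeval_X, Polynomial.aeval_C]
    have hcoe : (algebraMap ↥A (MvPolynomial (Fin (n + 1)) ℂ)) ((c k)⁻¹ • g k)
        = C (c k)⁻¹ * ((g k : MvPolynomial (Fin (n + 1)) ℂ)) := by
      rw [show (algebraMap ↥A (MvPolynomial (Fin (n + 1)) ℂ)) ((c k)⁻¹ • g k)
        = (((c k)⁻¹ • g k : ↥A) : MvPolynomial (Fin (n + 1)) ℂ) from rfl]
      rw [Subalgebra.coe_smul, smul_eq_C_mul]
    rw [hcoe, mul_add, ← mul_assoc, ← _root_.map_mul, mul_inv_cancel₀ hk, _root_.map_one, one_mul]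
    exact (hWdecomp k).symm
  set Np : Fin (n + 2) → Polynomial ↥A := fun k =>
    Polynomial.X + Polynomial.C ((c k)⁻¹ • g k) with hNp
  have hNpMonic : ∀ k, (Np k).Monic := fun k => Polynomial.monic_X_add_C _
  have hNpdeg : ∀ k, (Np k).natDegree = 1 := fun k => Polynomial.natDegree_X_add_C _
  set Q1 : Polynomial ↥A := Np (Fin.last (n + 1)) ^ r * ∏ j ∈ NS, Np j.castSucc ^ a j with hQ1
  set Q2 : Polynomial ↥A := ∏ j ∈ PS, Np j.castSucc ^ b j with hQ2
  have hQ1M : Q1.Monic := ((hNpMonic _).pow r).mul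
    (Polynomial.monic_prod_of_monic _ _ fun j _ => (hNpMonic _).pow _)
  have hQ2M : Q2.Monic := Polynomial.monic_prod_of_monic _ _ fun j _ => (hNpMonic _).pow _
  have hQ1deg : Q1.natDegree = D1 := by
    rw [hQ1, ((hNpMonic _).pow r).natDegree_mul
      (Polynomial.monic_prod_of_monic _ _ fun j _ => (hNpMonic _).pow _)]
    rw [Polynomial.natDegree_pow, hNpdeg, mul_one]
    rw [Polynomial.natDegree_prod_of_monic _ _ fun j _ => (hNpMonic _).pow _]
    rw [hD1]
    congr 1
    exact Finset.sum_congr rfl fun j _ => by rw [Polynomial.natDegree_pow, hNpdeg, mul_one]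
  have hQ2deg : Q2.natDegree = D2 := by
    rw [hQ2, Polynomial.natDegree_prod_of_monic _ _ fun j _ => (hNpMonic _).pow _, hD2]
    exact Finset.sum_congr rfl fun j _ => by rw [Polynomial.natDegree_pow, hNpdeg, mul_one]
  -- the scalars
  set κ1 : ℂ := c (Fin.last (n + 1)) ^ r * ∏ j ∈ NS, c j.castSucc ^ a j with hκ1
  set κ2 : ℂ := lam ^ r * ∏ j ∈ PS, c j.castSucc ^ b j with hκ2
  have hcNS : ∀ j ∈ NS, c j.castSucc ≠ 0 := by
    intro j hj
    rw [hNS, Finset.mem_filter] at hj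
    exact hcj_ne j (ne_of_lt hj.2)
  have hcPS : ∀ j ∈ PS, c j.castSucc ≠ 0 := by
    intro j hj
    rw [hPS, Finset.mem_filter] at hj
    exact hcj_ne j (ne_of_gt hj.2)
  have hκ1ne : κ1 ≠ 0 := mul_ne_zero (pow_ne_zero _ hclast_ne)
    (Finset.prod_ne_zero_iff.mpr fun j hj => pow_ne_zero _ (hcNS j hj))
  have hκ2ne : κ2 ≠ 0 := mul_ne_zero (pow_ne_zero _ hlam)
    (Finset.prod_ne_zero_iff.mpr fun j hj => pow_ne_zero _ (hcPS j hj))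
  -- evaluations
  have hevQ1 : C κ1 * Polynomial.aeval f Q1
      = W (Fin.last (n + 1)) ^ r * ∏ j ∈ NS, W j.castSucc ^ a j := by
    rw [hκ1, hQ1, _root_.map_mul, map_pow, map_prod, _root_.map_mul, map_pow, map_prod]
    rw [mul_mul_mul_comm, ← mul_pow, hevN _ hclast_ne]
    congr 1
    rw [← Finset.prod_mul_distrib]
    refine Finset.prod_congr rfl fun j hj => ?_
    rw [map_pow, map_pow, ← mul_pow, hevN _ (hcNS j hj)]
  have hevQ2 : C κ2 * Polynomial.aeval f Q2
      = C (lam ^ r) * ∏ j ∈ PS, W j.castSucc ^ b j := by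
    rw [hκ2, hQ2, _root_.map_mul, map_prod, map_prod, mul_assoc]
    congr 1
    rw [← Finset.prod_mul_distrib]
    refine Finset.prod_congr rfl fun j hj => ?_
    rw [map_pow, map_pow, ← mul_pow, hevN _ (hcPS j hj)]
  have hEE : C κ1 * Polynomial.aeval f Q1 = C κ2 * Polynomial.aeval f Q2 := by
    rw [hevQ1, hevQ2, hkey]
  -- translation of the target degree
  have hgoalD : (max ((r : ℤ) + ∑ j ∈ NS, (- p j)) (∑ j ∈ PS, p j)).toNat = max D1 D2 := by
    have h1 : (r : ℤ) + ∑ j ∈ NS, (- p j) = (D1 : ℤ) := by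
      rw [hD1]
      push_cast
      congr 1
      exact (Finset.sum_congr rfl fun j hj => (hpneg j hj)).symm
    have h2 : ∑ j ∈ PS, p j = (D2 : ℤ) := by
      rw [hD2]
      push_cast
      exact (Finset.sum_congr rfl fun j hj => (hppos j hj)).symm
    rw [h1, h2, ← Nat.cast_max, Int.toNat_natCast]
  have hCinj : ∀ x : ℂ, x ≠ 0 → (C x : MvPolynomial (Fin (n + 1)) ℂ) ≠ 0 := by
    intro x hx h
    exact hx (by rwa [C_eq_zero] at h)
  rcases lt_or_gt_of_ne hDne with hlt | hlt
  · -- D1 < D2 : use Q2 - C(κ2⁻¹ κ1) Q1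
    set q : Polynomial ↥A := Q2 - Polynomial.C (algebraMap ℂ ↥A (κ2⁻¹ * κ1)) * Q1 with hqdef
    have hdegC : (Polynomial.C (algebraMap ℂ ↥A (κ2⁻¹ * κ1)) * Q1).natDegree < Q2.natDegree := by
      rw [hQ2deg]
      exact lt_of_le_of_lt (le_trans (Polynomial.natDegree_C_mul_le _ _) (le_of_eq hQ1deg)) hlt
    have hqM : q.Monic := hQ2M.sub_of_left (Polynomial.degree_lt_degree hdegC)
    have hqdeg : q.natDegree = D2 := by
      rw [hqdef, Polynomial.natDegree_sub_eq_left_of_natDegree_lt (by rw [hQ2deg] at hdegC ⊢; exact hdegC), hQ2deg]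
    have hqev : Polynomial.aeval f q = 0 := by
      have hC1 : C κ2 * Polynomial.aeval f q = 0 := by
        have step : Polynomial.aeval f (Q2 - Polynomial.C (algebraMap ℂ ↥A (κ2⁻¹ * κ1)) * Q1)
            = Polynomial.aeval f Q2 - C (κ2⁻¹ * κ1) * Polynomial.aeval f Q1 := by
          rw [map_sub (Polynomial.aeval (R := ↥A) f),
            _root_.map_mul (Polynomial.aeval (R := ↥A) f)
              (Polynomial.C (algebraMap ℂ ↥A (κ2⁻¹ * κ1))) Q1, Polynomial.aeval_C]
          rfl
        rw [hqdef, step, mul_sub, ← hEE, ← mul_assoc, ← _root_.map_mul]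
        rw [show κ2 * (κ2⁻¹ * κ1) = κ1 by field_simp]
        ring
      rcases mul_eq_zero.mp hC1 with h | h
      · exact absurd h (hCinj _ hκ2ne)
      · exact h
    refine ⟨⟨q, hqM, by rw [← Polynomial.aeval_def]; exact hqev⟩, q, hqM, ?_, hqev⟩
    rw [hqdeg, hgoalD, max_eq_right hlt.le]
  · -- D2 < D1 : use Q1 - C(κ1⁻¹ κ2) Q2
    set q : Polynomial ↥A := Q1 - Polynomial.C (algebraMap ℂ ↥A (κ1⁻¹ * κ2)) * Q2 with hqdef
    have hdegC : (Polynomial.C (algebraMap ℂ ↥A (κ1⁻¹ * κ2)) * Q2).natDegree < Q1.natDegree := by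
      rw [hQ1deg]
      exact lt_of_le_of_lt (le_trans (Polynomial.natDegree_C_mul_le _ _) (le_of_eq hQ2deg)) hlt
    have hqM : q.Monic := hQ1M.sub_of_left (Polynomial.degree_lt_degree hdegC)
    have hqdeg : q.natDegree = D1 := by
      rw [hqdef, Polynomial.natDegree_sub_eq_left_of_natDegree_lt (by rw [hQ1deg] at hdegC ⊢; exact hdegC), hQ1deg]
    have hqev : Polynomial.aeval f q = 0 := by
      have hC1 : C κ1 * Polynomial.aeval f q = 0 := by
        have step : Polynomial.aeval f (Q1 - Polynomial.C (algebraMap ℂ ↥A (κ1⁻¹ * κ2)) * Q2)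
            = Polynomial.aeval f Q1 - C (κ1⁻¹ * κ2) * Polynomial.aeval f Q2 := by
          rw [map_sub (Polynomial.aeval (R := ↥A) f),
            _root_.map_mul (Polynomial.aeval (R := ↥A) f)
              (Polynomial.C (algebraMap ℂ ↥A (κ1⁻¹ * κ2))) Q2, Polynomial.aeval_C]
          rfl
        rw [hqdef, step, mul_sub, hEE, ← mul_assoc, ← _root_.map_mul]
        rw [show κ1 * (κ1⁻¹ * κ2) = κ2 by field_simp]
        ring
      rcases mul_eq_zero.mp hC1 with h | h
      · exact absurd h (hCinj _ hκ1ne)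
      · exact h
    refine ⟨⟨q, hqM, by rw [← Polynomial.aeval_def]; exact hqev⟩, q, hqM, ?_, hqev⟩
    rw [hqdeg, hgoalD, max_eq_left hlt.le]
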